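/- Let X be an m×n matrix of independent indeterminates over a field K equipped with a diagonal monomial order (i.e., the leading monomial of every maximal minor [a_1,...,a_m]_X with columns a_1 < ... < a_m is the product of its diagonal entries X_{1a_1}X_{2a_2}⋯X_{ma_m}). If μ and μ' are two distinct standard monomials on the poset Γ(m×n) of maximal minors (i.e., products of maximal minors along a chain in the componentwise order), then LM(μ_X) ≠ LM(μ'_X). -/

import Mathlib

open MvPolynomial

set_option maxHeartbeats 1000000

/-- `μ` is the leading monomial of `f` with respect to the strict monomial order `lt`. -/
def IsLeadMonWrt {K : Type*} [CommSemiring K] {σ : Type*}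
    (lt : (σ →₀ ℕ) → (σ →₀ ℕ) → Prop)
    (f : MvPolynomial σ K) (μ : σ →₀ ℕ) : Prop :=
  μ ∈ f.support ∧ ∀ ν ∈ f.support, ν ≠ μ → lt ν μ

section Aux

variable {K : Type*} [Field K] {σ : Type*} [DecidableEq σ]
variable {lt : (σ →₀ ℕ) → (σ →₀ ℕ) → Prop}

theorem leadMon_unique (hirrefl : ∀ a, ¬ lt a a)
    (htrans : ∀ a b c, lt a b → lt b c → lt a c) {f : MvPolynomial σ K} {μ μ' : σ →₀ ℕ}
    (h : IsLeadMonWrt lt f μ) (h' : IsLeadMonWrt lt f μ') : μ = μ' := by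
  by_contra hne
  exact hirrefl μ (htrans _ _ _ (h'.2 μ h.1 hne) (h.2 μ' h'.1 (Ne.symm hne)))

theorem leadMon_mul (hirrefl : ∀ a, ¬ lt a a)
    (htrans : ∀ a b c, lt a b → lt b c → lt a c)
    (haddRight : ∀ a b c, lt a b → lt (a + c) (b + c)) {f g : MvPolynomial σ K} {μ ν : σ →₀ ℕ}
    (hf : IsLeadMonWrt lt f μ) (hg : IsLeadMonWrt lt g ν) :
    IsLeadMonWrt lt (f * g) (μ + ν) := by
  have key : ∀ α β : σ →₀ ℕ, α ∈ f.support → β ∈ g.support → (α ≠ μ ∨ β ≠ ν) →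
      lt (α + β) (μ + ν) := by
    intro α β hα hβ hne
    have hαcase : lt (α + β) (μ + β) ∨ α = μ := by
      by_cases h : α = μ
      · exact Or.inr h
      · exact Or.inl (haddRight _ _ _ (hf.2 α hα h))
    have hβcase : lt (μ + β) (μ + ν) ∨ β = ν := by
      by_cases h : β = ν
      · exact Or.inr h
      · refine Or.inl ?_
        have h2 := haddRight _ _ μ (hg.2 β hβ h)
        rwa [add_comm β μ, add_comm ν μ] at h2
    rcases hαcase with h1 | rfl
    · rcases hβcase with h2 | rfl
      · exact htrans _ _ _ h1 h2
      · exact h1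
    · rcases hβcase with h2 | rfl
      · exact h2
      · rcases hne with h | h <;> exact absurd rfl h
  have hcoeff : (f * g).coeff (μ + ν) = f.coeff μ * g.coeff ν := by
    rw [MvPolynomial.coeff_mul]
    refine Finset.sum_eq_single (μ, ν) ?_ ?_
    · rintro ⟨α, β⟩ hp hpne
      have heq : α + β = μ + ν := Finset.HasAntidiagonal.mem_antidiagonal.mp hp
      by_contra h0
      have hα : α ∈ f.support := MvPolynomial.mem_support_iff.mpr (left_ne_zero_of_mul h0)
      have hβ : β ∈ g.support := MvPolynomial.mem_support_iff.mpr (right_ne_zero_of_mul h0)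
      have hd : α ≠ μ ∨ β ≠ ν := by
        by_contra hc
        push_neg at hc
        exact hpne (Prod.ext hc.1 hc.2)
      have := key α β hα hβ hd
      rw [heq] at this
      exact hirrefl _ this
    · intro h
      simp at h
  constructor
  · rw [MvPolynomial.mem_support_iff, hcoeff]
    exact mul_ne_zero (MvPolynomial.mem_support_iff.mp hf.1)
      (MvPolynomial.mem_support_iff.mp hg.1)
  · intro ξ hξ hξne
    have h0 := MvPolynomial.mem_support_iff.mp hξ
    rw [MvPolynomial.coeff_mul] at h0
    obtain ⟨⟨α, β⟩, hp, hne0⟩ := Finset.exists_ne_zero_of_sum_ne_zero h0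
    have heq : α + β = ξ := Finset.HasAntidiagonal.mem_antidiagonal.mp hp
    have hα : α ∈ f.support := MvPolynomial.mem_support_iff.mpr (left_ne_zero_of_mul hne0)
    have hβ : β ∈ g.support := MvPolynomial.mem_support_iff.mpr (right_ne_zero_of_mul hne0)
    rw [← heq]
    refine key α β hα hβ ?_
    by_contra hc
    push_neg at hc
    rw [hc.1, hc.2] at heq
    exact hξne heq.symm

end Aux

theorem leadMon_standard_monomials_distinct (K : Type*) [Field K] (m n : ℕ)
    (hm : 0 < m) (hmn : m ≤ n)
    (lt : ((Fin m × Fin n) →₀ ℕ) → ((Fin m × Fin n) →₀ ℕ) → Prop)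
    (hirrefl : ∀ a, ¬ lt a a)
    (htrans : ∀ a b c, lt a b → lt b c → lt a c)
    (htotal : ∀ a b, a ≠ b → lt a b ∨ lt b a)
    (haddRight : ∀ a b c, lt a b → lt (a + c) (b + c))
    (hdiag : ∀ a : Fin m → Fin n, StrictMono a →
      IsLeadMonWrt lt
        ((Matrix.of fun i j : Fin m => (MvPolynomial.X (i, a j) :
            MvPolynomial (Fin m × Fin n) K)).det)
        (∑ i : Fin m, Finsupp.single (i, a i) 1))
    (L₁ L₂ : List (Fin m → Fin n))
    (hL₁mono : ∀ a ∈ L₁, StrictMono a) (hL₂mono : ∀ a ∈ L₂, StrictMono a)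
    (hL₁chain : L₁.Chain' fun a b => ∀ i, a i ≤ b i)
    (hL₂chain : L₂.Chain' fun a b => ∀ i, a i ≤ b i)
    (hne : L₁ ≠ L₂)
    (μ₁ μ₂ : (Fin m × Fin n) →₀ ℕ)
    (h₁ : IsLeadMonWrt lt
      ((L₁.map fun a => (Matrix.of fun i j : Fin m => (MvPolynomial.X (i, a j) :
          MvPolynomial (Fin m × Fin n) K)).det)).prod μ₁)
    (h₂ : IsLeadMonWrt lt
      ((L₂.map fun a => (Matrix.of fun i j : Fin m => (MvPolynomial.X (i, a j) :
          MvPolynomial (Fin m × Fin n) K)).det)).prod μ₂) :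
    μ₁ ≠ μ₂ := by
  -- abbreviations
  set D : (Fin m → Fin n) → MvPolynomial (Fin m × Fin n) K :=
    fun a => (Matrix.of fun i j : Fin m => (MvPolynomial.X (i, a j) :
      MvPolynomial (Fin m × Fin n) K)).det with hD
  set S : (Fin m → Fin n) → ((Fin m × Fin n) →₀ ℕ) :=
    fun a => ∑ i : Fin m, Finsupp.single (i, a i) 1 with hS
  -- leading monomial of a product along a list
  have hprod : ∀ L : List (Fin m → Fin n), (∀ a ∈ L, StrictMono a) →
      IsLeadMonWrt lt ((L.map D).prod) ((L.map S).sum) := by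
    intro L
    induction L with
    | nil =>
      intro _
      constructor
      · simp [MvPolynomial.mem_support_iff]
      · intro ν hν hνne
        exfalso
        apply hνne
        rw [MvPolynomial.mem_support_iff] at hν
        simp only [List.map_nil, List.sum_nil, List.prod_nil] at hν ⊢
        by_contra hν0
        rw [MvPolynomial.coeff_one, if_neg (fun h => hν0 h.symm)] at hν
        exact hν rfl
    | cons a L ih =>
      intro hmono
      simp only [List.map_cons, List.prod_cons, List.sum_cons]
      exact leadMon_mul hirrefl htrans haddRight (hdiag a (hmono a (by simp)))
        (ih fun b hb => hmono b (List.mem_cons_of_mem a hb))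
  have e₁ : μ₁ = (L₁.map S).sum :=
    leadMon_unique hirrefl htrans h₁ (hprod L₁ hL₁mono)
  have e₂ : μ₂ = (L₂.map S).sum :=
    leadMon_unique hirrefl htrans h₂ (hprod L₂ hL₂mono)
  rw [e₁, e₂]
  intro hsum
  apply hne
  -- count lemma
  have hSapp : ∀ (a : Fin m → Fin n) (i : Fin m) (j : Fin n),
      S a (i, j) = if a i = j then 1 else 0 := by
    intro a i j
    rw [hS]
    rw [Finsupp.finset_sum_apply]
    rw [Finset.sum_eq_single i]
    · simp [Finsupp.single_apply, Prod.ext_iff]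
    · intro i' _ hi'
      simp [Finsupp.single_apply, Prod.ext_iff, hi']
    · simp
  have hcount : ∀ (L : List (Fin m → Fin n)) (i : Fin m) (j : Fin n),
      ((L.map S).sum) (i, j) = (L.map fun a => a i).count j := by
    intro L i j
    induction L with
    | nil => simp
    | cons a L ih =>
      simp only [List.map_cons, List.sum_cons, List.count_cons, Finsupp.add_apply, ih, hSapp]
      rcases eq_or_ne (a i) j with h | h
      · simp [h, add_comm]
      · simp [h, Ne.symm h]
  -- rows are equal
  have hrow : ∀ i : Fin m, (L₁.map fun a => a i) = (L₂.map fun a => a i) := by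
    intro i
    have hperm : List.Perm (L₁.map fun a => a i) (L₂.map fun a => a i) := by
      rw [List.perm_iff_count]
      intro j
      rw [← hcount, ← hcount, hsum]
    have hs₁ : (L₁.map fun a => a i).Pairwise (· ≤ ·) := by
      rw [← List.isChain_iff_pairwise, List.isChain_map]
      exact List.IsChain.imp (fun a b h => h i) hL₁chain
    have hs₂ : (L₂.map fun a => a i).Pairwise (· ≤ ·) := by
      rw [← List.isChain_iff_pairwise, List.isChain_map]
      exact List.IsChain.imp (fun a b h => h i) hL₂chain
    exact List.Perm.eq_of_pairwise' hs₁ hs₂ hperm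
  -- conclude
  have hlen : L₁.length = L₂.length := by
    have := congrArg List.length (hrow ⟨0, hm⟩)
    simpa using this
  refine List.ext_getElem hlen ?_
  intro k hk₁ hk₂
  funext i
  have e : (L₁.map fun a => a i)[k]'(by simpa using hk₁) =
      (L₂.map fun a => a i)[k]'(by simpa using hk₂) := by
    simp only [hrow i]
  simpa using e
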